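/- Let P be an n×n complex Hermitian idempotent matrix (Pᴴ = P, P·P = P), let M be an n×k complex matrix, and let G be a k×m complex matrix such that P·(M·G) = M·G. Then Re tr(Mᴴ·P·M) · Re tr(G·Gᴴ) ≥ Re tr(M·G·Gᴴ·Mᴴ); that is, the trace of the projected quadratic form, scaled by tr(G Gᴴ), upper-bounds the trace tr(M G Gᴴ Mᴴ). -/

import Mathlib

open Finset

private lemma trace_self_mul_conjTranspose_re {a b : ℕ} (A : Matrix (Fin a) (Fin b) ℂ) :
    (A * A.conjTranspose).trace.re = ∑ i, ∑ j, Complex.normSq (A i j) := by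
  simp only [Matrix.trace, Matrix.diag, Matrix.mul_apply, Matrix.conjTranspose_apply,
    Complex.mul_conj]
  rw [Complex.re_sum]
  refine Finset.sum_congr rfl fun i _ => ?_
  rw [Complex.re_sum]
  simp [Complex.normSq_apply]

private lemma normSq_mul_apply_le {a b c : ℕ} (A : Matrix (Fin a) (Fin b) ℂ)
    (B : Matrix (Fin b) (Fin c) ℂ) (i : Fin a) (j : Fin c) :
    Complex.normSq ((A * B) i j) ≤
      (∑ l, Complex.normSq (A i l)) * (∑ l, Complex.normSq (B l j)) := by
  have h1 : ‖(A * B) i j‖ ≤ ∑ l, ‖A i l‖ * ‖B l j‖ := by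
    rw [Matrix.mul_apply]
    exact (norm_sum_le _ _).trans (by simp [norm_mul])
  have h2 : (∑ l, ‖A i l‖ * ‖B l j‖) ^ 2 ≤
      (∑ l, ‖A i l‖ ^ 2) * (∑ l, ‖B l j‖ ^ 2) :=
    Finset.sum_mul_sq_le_sq_mul_sq _ _ _
  calc Complex.normSq ((A * B) i j) = ‖(A * B) i j‖ ^ 2 := by
        rw [Complex.sq_norm]
    _ ≤ (∑ l, ‖A i l‖ * ‖B l j‖) ^ 2 := by
        exact pow_le_pow_left₀ (norm_nonneg _) h1 2
    _ ≤ (∑ l, ‖A i l‖ ^ 2) * (∑ l, ‖B l j‖ ^ 2) := h2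
    _ = (∑ l, Complex.normSq (A i l)) * (∑ l, Complex.normSq (B l j)) := by
        simp [Complex.sq_norm]

private lemma sq_mul_le {a b c : ℕ} (A : Matrix (Fin a) (Fin b) ℂ)
    (B : Matrix (Fin b) (Fin c) ℂ) :
    (∑ i, ∑ j, Complex.normSq ((A * B) i j)) ≤
      (∑ i, ∑ l, Complex.normSq (A i l)) * (∑ l, ∑ j, Complex.normSq (B l j)) := by
  calc (∑ i, ∑ j, Complex.normSq ((A * B) i j))
      ≤ ∑ i, ∑ j, (∑ l, Complex.normSq (A i l)) * (∑ l, Complex.normSq (B l j)) := by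
        refine Finset.sum_le_sum fun i _ => Finset.sum_le_sum fun j _ => ?_
        exact normSq_mul_apply_le A B i j
    _ = (∑ i, ∑ l, Complex.normSq (A i l)) * (∑ l, ∑ j, Complex.normSq (B l j)) := by
        rw [Finset.sum_mul_sum]
        refine Finset.sum_congr rfl fun i _ => ?_
        rw [← Finset.mul_sum, ← Finset.mul_sum, Finset.sum_comm]

theorem proj_trace_lower_bound {n k m : ℕ}
    (P : Matrix (Fin n) (Fin n) ℂ) (M : Matrix (Fin n) (Fin k) ℂ)
    (G : Matrix (Fin k) (Fin m) ℂ)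
    (hherm : P.conjTranspose = P) (hidem : P * P = P)
    (hfix : P * (M * G) = M * G) :
    (M * G * G.conjTranspose * M.conjTranspose).trace.re ≤
      (M.conjTranspose * P * M).trace.re * (G * G.conjTranspose).trace.re := by
  have hL : (M * G * G.conjTranspose * M.conjTranspose) =
      (M * G) * (M * G).conjTranspose := by
    rw [Matrix.conjTranspose_mul, Matrix.mul_assoc]
  have hP : (P * M).conjTranspose * (P * M) = M.conjTranspose * P * M := by
    rw [Matrix.conjTranspose_mul, hherm, Matrix.mul_assoc, ← Matrix.mul_assoc P P M, hidem,
      ← Matrix.mul_assoc]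
  have htr : (M.conjTranspose * P * M).trace = ((P * M) * (P * M).conjTranspose).trace := by
    rw [← hP, Matrix.trace_mul_comm]
  have hMG : M * G = (P * M) * G := by rw [Matrix.mul_assoc, hfix]
  rw [hL, htr, trace_self_mul_conjTranspose_re, trace_self_mul_conjTranspose_re,
    trace_self_mul_conjTranspose_re, hMG]
  exact sq_mul_le (P * M) G
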